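/- Let ξ_1,...,ξ_m be independent nonnegative random variables and suppose there exist constants C, ε_0 > 0 such that P(ξ_j < ε) ≤ C ε² for all ε ≥ ε_0 and all j. Then there is a constant C' depending only on C such that P(∑_{j=1}^m ξ_j² < ε² m) ≤ (C' ε)^{2m} for all ε ≥ ε_0. -/

import Mathlib

open Finset MeasureTheory ProbabilityTheory

lemma h2e : 2 / Real.exp 1 ≤ 3 / 4 := by
  rw [div_le_iff₀ (Real.exp_pos 1)]
  nlinarith [Real.exp_one_gt_d9]

lemma real_geom : (1 - 2 / Real.exp 1)⁻¹ ≤ 4 := by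
  have h := h2e
  calc (1 - 2 / Real.exp 1)⁻¹ ≤ ((1:ℝ)/4)⁻¹ := by
        apply inv_anti₀ <;> [norm_num; linarith]
    _ = 4 := by norm_num

lemma key_factor {Ω : Type} [MeasurableSpace Ω] (μ : Measure Ω) [IsProbabilityMeasure μ]
    (C ε₀ ε : ℝ) (hC : 0 < C) (hε : 0 < ε) (hε₀ : ε₀ ≤ ε)
    (X : Ω → ℝ) (hm : Measurable X) (hpos : ∀ ω, 0 ≤ X ω)
    (htail : ∀ ε' : ℝ, ε₀ ≤ ε' → μ {ω | X ω < ε'} ≤ ENNReal.ofReal (C * ε' ^ 2)) :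
    ∫⁻ ω, ENNReal.ofReal (Real.exp (-(X ω ^ 2 / ε ^ 2))) ∂μ
      ≤ ENNReal.ofReal (4 * C * ε ^ 2) := by
  set s : ℕ → Set Ω := fun k => {ω | X ω ^ 2 / ε ^ 2 < (k : ℝ) + 1} with hs
  have hsm : ∀ k, MeasurableSet (s k) := fun k =>
    measurableSet_lt ((hm.pow_const 2).div_const _) measurable_const
  have hpt : ∀ ω, ENNReal.ofReal (Real.exp (-(X ω ^ 2 / ε ^ 2)))
      ≤ ∑' k : ℕ, (s k).indicator (fun _ => ENNReal.ofReal (Real.exp (-(k : ℝ)))) ω := by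
    intro ω
    set x := X ω ^ 2 / ε ^ 2 with hx
    have hx0 : 0 ≤ x := by positivity
    have h1 : x < (⌊x⌋₊ : ℝ) + 1 := Nat.lt_floor_add_one x
    have h2 : (⌊x⌋₊ : ℝ) ≤ x := Nat.floor_le hx0
    calc ENNReal.ofReal (Real.exp (-x))
        ≤ (s ⌊x⌋₊).indicator (fun _ => ENNReal.ofReal (Real.exp (-(⌊x⌋₊ : ℝ)))) ω := by
          rw [Set.indicator_of_mem (show ω ∈ s ⌊x⌋₊ from h1)]
          exact ENNReal.ofReal_le_ofReal (Real.exp_le_exp.2 (by linarith))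
      _ ≤ _ := ENNReal.le_tsum
          (f := fun k : ℕ => (s k).indicator (fun _ => ENNReal.ofReal (Real.exp (-(k : ℝ)))) ω) _
  calc ∫⁻ ω, ENNReal.ofReal (Real.exp (-(X ω ^ 2 / ε ^ 2))) ∂μ
      ≤ ∫⁻ ω, ∑' k : ℕ, (s k).indicator (fun _ => ENNReal.ofReal (Real.exp (-(k : ℝ)))) ω ∂μ :=
        lintegral_mono hpt
    _ = ∑' k : ℕ, ∫⁻ ω, (s k).indicator (fun _ => ENNReal.ofReal (Real.exp (-(k : ℝ)))) ω ∂μ :=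
        lintegral_tsum fun k => ((measurable_const.indicator (hsm k)).aemeasurable)
    _ = ∑' k : ℕ, ENNReal.ofReal (Real.exp (-(k : ℝ))) * μ (s k) :=
        tsum_congr fun k => lintegral_indicator_const (hsm k) _
    _ ≤ ∑' k : ℕ, ENNReal.ofReal (C * ε ^ 2 * (2 / Real.exp 1) ^ k) := by
        refine ENNReal.tsum_le_tsum fun k => ?_
        have hsk : μ (s k) ≤ ENNReal.ofReal (C * (ε * Real.sqrt ((k : ℝ) + 1)) ^ 2) := by
          have hsqrt : ε * Real.sqrt ((k : ℝ) + 1) = Real.sqrt (((k : ℝ) + 1) * ε ^ 2) := by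
            rw [Real.sqrt_mul (by positivity), Real.sqrt_sq hε.le, mul_comm]
          have hsub : s k ⊆ {ω | X ω < ε * Real.sqrt ((k : ℝ) + 1)} := by
            intro ω hω
            simp only [hs, Set.mem_setOf_eq] at hω ⊢
            have h1 : X ω ^ 2 < ((k : ℝ) + 1) * ε ^ 2 := by
              rw [div_lt_iff₀ (by positivity)] at hω; linarith
            rw [hsqrt]
            exact (Real.lt_sqrt (hpos ω)).2 h1
          refine le_trans (measure_mono hsub) (htail _ ?_)
          nlinarith [Real.sqrt_le_sqrt (by linarith : (1:ℝ) ≤ (k : ℝ) + 1), Real.sqrt_one,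
            Real.sqrt_nonneg ((k:ℝ)+1)]
        calc ENNReal.ofReal (Real.exp (-(k : ℝ))) * μ (s k)
            ≤ ENNReal.ofReal (Real.exp (-(k : ℝ))) *
              ENNReal.ofReal (C * (ε * Real.sqrt ((k : ℝ) + 1)) ^ 2) := by gcongr
          _ = ENNReal.ofReal (Real.exp (-(k : ℝ)) * (C * (ε * Real.sqrt ((k : ℝ) + 1)) ^ 2)) := by
              rw [ENNReal.ofReal_mul (Real.exp_nonneg _)]
          _ ≤ ENNReal.ofReal (C * ε ^ 2 * (2 / Real.exp 1) ^ k) := by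
              apply ENNReal.ofReal_le_ofReal
              have hsq : Real.sqrt ((k : ℝ) + 1) ^ 2 = (k : ℝ) + 1 :=
                Real.sq_sqrt (by positivity)
              have hek : Real.exp 1 ^ k = Real.exp (k : ℝ) := by
                rw [← Real.exp_nat_mul, mul_one]
              have hexp : Real.exp (-(k : ℝ)) = (Real.exp 1)⁻¹ ^ k := by
                rw [Real.exp_neg, ← hek, ← inv_pow]
              have hk2 : (k : ℝ) + 1 ≤ 2 ^ k := by
                exact_mod_cast (Nat.lt_two_pow_self (n := k))
              rw [mul_pow, hsq, hexp, div_pow, div_eq_mul_inv, ← inv_pow]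
              nlinarith [mul_le_mul_of_nonneg_left hk2
                (by positivity : (0:ℝ) ≤ C * ε ^ 2 * ((Real.exp 1)⁻¹ ^ k))]
    _ = ENNReal.ofReal (∑' k : ℕ, C * ε ^ 2 * (2 / Real.exp 1) ^ k) := by
        rw [ENNReal.ofReal_tsum_of_nonneg]
        · intro k; positivity
        · exact Summable.mul_left _
            (summable_geometric_of_lt_one (by positivity) (by linarith [h2e]))
    _ ≤ ENNReal.ofReal (4 * C * ε ^ 2) := by
        apply ENNReal.ofReal_le_ofReal
        rw [tsum_mul_left, tsum_geometric_of_lt_one (by positivity) (by linarith [h2e])]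
        nlinarith [mul_le_mul_of_nonneg_left real_geom
          (by positivity : (0:ℝ) ≤ C * ε ^ 2)]

lemma key_mgf {Ω : Type} [MeasurableSpace Ω] (μ : Measure Ω) [IsProbabilityMeasure μ]
    (C ε₀ ε : ℝ) (hC : 0 < C) (hε : 0 < ε) (hε₀ : ε₀ ≤ ε)
    (X : Ω → ℝ) (hm : Measurable X) (hpos : ∀ ω, 0 ≤ X ω)
    (htail : ∀ ε' : ℝ, ε₀ ≤ ε' → μ {ω | X ω < ε'} ≤ ENNReal.ofReal (C * ε' ^ 2)) :
    mgf (fun ω => X ω ^ 2 / ε ^ 2) μ (-1) ≤ 4 * C * ε ^ 2 := by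
  have heq : (fun ω => Real.exp (-1 * (X ω ^ 2 / ε ^ 2)))
      = fun ω => Real.exp (-(X ω ^ 2 / ε ^ 2)) := by
    funext ω; rw [neg_one_mul]
  rw [mgf]
  calc μ[fun ω => Real.exp (-1 * (X ω ^ 2 / ε ^ 2))]
      = (∫⁻ ω, ENNReal.ofReal (Real.exp (-(X ω ^ 2 / ε ^ 2))) ∂μ).toReal := by
        rw [heq]
        rw [integral_eq_lintegral_of_nonneg_ae (f := fun ω => Real.exp (-(X ω ^ 2 / ε ^ 2)))
          (Filter.Eventually.of_forall fun ω => (Real.exp_pos _).le)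
          (((hm.pow_const 2).div_const _).neg.exp.aestronglyMeasurable)]
    _ ≤ 4 * C * ε ^ 2 := by
        apply ENNReal.toReal_le_of_le_ofReal (by positivity)
        exact key_factor μ C ε₀ ε hC hε hε₀ X hm hpos htail

theorem stmt11 (C : ℝ) (hC : 0 < C) :
    ∃ C' : ℝ, 0 < C' ∧
      ∀ (ε₀ : ℝ), 0 < ε₀ →
      ∀ (Ω : Type) (_ : MeasurableSpace Ω) (μ : Measure Ω), IsProbabilityMeasure μ →
      ∀ (m : ℕ) (ξ : Fin m → Ω → ℝ),
        (∀ j, Measurable (ξ j)) →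
        (∀ j ω, 0 ≤ ξ j ω) →
        iIndepFun ξ μ →
        (∀ j, ∀ ε : ℝ, ε₀ ≤ ε → μ {ω | ξ j ω < ε} ≤ ENNReal.ofReal (C * ε ^ 2)) →
        ∀ ε : ℝ, ε₀ ≤ ε →
          μ {ω | ∑ j, ξ j ω ^ 2 < ε ^ 2 * m} ≤ ENNReal.ofReal ((C' * ε) ^ (2 * m)) := by
  refine ⟨Real.sqrt (4 * Real.exp 1 * C), Real.sqrt_pos.2 (by positivity), ?_⟩
  intro ε₀ hε₀ Ω mΩ μ hμ m ξ hmeas hpos hindep htail ε hε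
  have hεpos : 0 < ε := lt_of_lt_of_le hε₀ hε
  set X : Fin m → Ω → ℝ := fun j ω => ξ j ω ^ 2 / ε ^ 2 with hX
  have hXm : ∀ j, Measurable (X j) := fun j => ((hmeas j).pow_const 2).div_const _
  have hiX : iIndepFun X μ :=
    hindep.comp (fun _ x => x ^ 2 / ε ^ 2)
      (fun _ => (measurable_id.pow_const 2).div_const _)
  have hSapp : ∀ ω, (∑ j, X j) ω = ∑ j, X j ω := fun ω => Finset.sum_apply ω Finset.univ X
  have hIntS : Integrable (fun ω => Real.exp (-1 * (∑ j, X j) ω)) μ := by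
    simp only [hSapp]
    refine Integrable.mono' (integrable_const 1)
      (((Finset.measurable_sum Finset.univ fun j _ => hXm j).const_mul _).exp.aestronglyMeasurable)
      (Filter.Eventually.of_forall fun ω => ?_)
    rw [Real.norm_eq_abs, Real.abs_exp, Real.exp_le_one_iff]
    have : 0 ≤ ∑ j, X j ω :=
      Finset.sum_nonneg fun j _ => by have := hpos j ω; positivity
    linarith
  have hmark := measure_le_le_exp_mul_mgf (μ := μ) (X := ∑ j, X j) (t := -1) (m : ℝ)
    (by norm_num) hIntS
  simp only [hSapp] at hmark
  have hmgfsum := hiX.mgf_sum (t := -1) hXm Finset.univ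
  have hmgfj : ∀ j, mgf (X j) μ (-1) ≤ 4 * C * ε ^ 2 := fun j =>
    key_mgf μ C ε₀ ε hC hεpos hε (ξ j) (hmeas j) (hpos j) (htail j)
  have hprod : ∏ j, mgf (X j) μ (-1) ≤ (4 * C * ε ^ 2) ^ m := by
    calc ∏ j, mgf (X j) μ (-1) ≤ ∏ _j : Fin m, (4 * C * ε ^ 2) :=
          Finset.prod_le_prod (fun j _ => mgf_nonneg) (fun j _ => hmgfj j)
      _ = (4 * C * ε ^ 2) ^ m := by
          rw [Finset.prod_const, Finset.card_univ, Fintype.card_fin]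
  have hsub : {ω | ∑ j, ξ j ω ^ 2 < ε ^ 2 * m} ⊆ {ω | ∑ j, X j ω ≤ (m : ℝ)} := by
    intro ω hω
    simp only [Set.mem_setOf_eq] at hω ⊢
    have hXsum : ∑ j, X j ω = (∑ j, ξ j ω ^ 2) / ε ^ 2 := by
      rw [hX, Finset.sum_div]
    rw [hXsum, div_le_iff₀ (by positivity)]
    linarith
  have hkey : (μ {ω | ∑ j, ξ j ω ^ 2 < ε ^ 2 * m}).toReal
      ≤ (Real.sqrt (4 * Real.exp 1 * C) * ε) ^ (2 * m) := by
    calc (μ {ω | ∑ j, ξ j ω ^ 2 < ε ^ 2 * m}).toReal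
        ≤ (μ {ω | ∑ j, X j ω ≤ (m : ℝ)}).toReal :=
          ENNReal.toReal_mono (measure_ne_top μ _) (measure_mono hsub)
      _ ≤ Real.exp (-(-1) * m) * mgf (∑ j, X j) μ (-1) := hmark
      _ = Real.exp m * ∏ j, mgf (X j) μ (-1) := by rw [hmgfsum]; norm_num
      _ ≤ Real.exp m * (4 * C * ε ^ 2) ^ m :=
          mul_le_mul_of_nonneg_left hprod (Real.exp_nonneg _)
      _ = (Real.sqrt (4 * Real.exp 1 * C) * ε) ^ (2 * m) := by
          have h1 : (Real.sqrt (4 * Real.exp 1 * C) * ε) ^ 2 = 4 * Real.exp 1 * C * ε ^ 2 := by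
            rw [mul_pow, Real.sq_sqrt (by positivity : (0:ℝ) ≤ 4 * Real.exp 1 * C)]
          rw [pow_mul, h1,
            show Real.exp (m : ℝ) = Real.exp 1 ^ m from by rw [← Real.exp_nat_mul, mul_one],
            ← mul_pow]
          ring_nf
  rw [ENNReal.le_ofReal_iff_toReal_le (measure_ne_top μ _) (by positivity)]
  exact hkey
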